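/- The number of orbits of the action of Z = {e, τ} (where τ = (1,2)(3,4)⋯(2r−1,2r) is the global transposition) on the right cosets S_{2r}/T of the norm-preserving subgroup T equals (1/4)[C(2r, r) + 2^r + C(r, r/2)·[r even]], where C(n,k) denotes the binomial coefficient and [r even] is 1 if r is even and 0 otherwise. -/

import Mathlib

open Equiv Equiv.Perm Finset MulAction


noncomputable section

/-- The global transposition `τ = (1,2)(3,4)⋯(2r−1,2r)`: positions are indexed
by `Fin r × Bool`, with `(k, false)` the ket index `2k−1` and `(k, true)` the
bra index `2k` of party `k`; `τ` flips each ket/bra pair. -/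
def tau (r : ℕ) : Equiv.Perm (Fin r × Bool) :=
  Equiv.prodCongr (Equiv.refl (Fin r)) (Equiv.swap false true)

/-- The subgroup `T` of norm-preserving permutations: generated by all
transpositions `(2k, 2l)` of bra indices, `(2k−1, 2l−1)` of ket indices,
together with the global transposition `τ`. -/
def normPresSubgroup (r : ℕ) : Subgroup (Equiv.Perm (Fin r × Bool)) :=
  Subgroup.closure
    ({tau r} ∪ {σ | ∃ k l : Fin r,
        σ = Equiv.swap (k, false) (l, false) ∨ σ = Equiv.swap (k, true) (l, true)})

section Aux

variable (r : ℕ)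

lemma tau_apply (x : Fin r × Bool) : tau r x = (x.1, !x.2) := by
  rcases x with ⟨k, b⟩
  cases b <;> simp [tau, Equiv.swap_apply_def]

lemma tau_sq : tau r * tau r = 1 := by
  ext x
  · simp [Perm.mul_apply, tau_apply]
  · simp [Perm.mul_apply, tau_apply]

/-- image of a finset under a permutation preserving snd -/
lemma image_compl (σ : Perm (Fin r × Bool)) (A : Finset (Fin r × Bool)) :
    Aᶜ.image σ = (A.image σ)ᶜ := by
  ext x
  simp only [mem_image, mem_compl]
  constructor
  · rintro ⟨y, hy, rfl⟩ ⟨z, hz, hzy⟩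
    exact hy (by rwa [← σ.injective hzy])
  · intro hx
    exact ⟨σ.symm x, fun h => hx ⟨σ.symm x, h, σ.apply_symm_apply x⟩, σ.apply_symm_apply x⟩

lemma image_eq_of_snd (σ : Perm (Fin r × Bool)) (h : ∀ x : Fin r × Bool, (σ x).2 = x.2)
    (b : Bool) (A : Finset (Fin r × Bool)) (hA : ∀ x ∈ A, x.2 = b) (hA' : ∀ x, x.2 = b → x ∈ A) :
    A.image σ = A := by
  ext x
  simp only [mem_image]
  constructor
  · rintro ⟨y, hy, rfl⟩
    exact hA' _ (by rw [h]; exact hA y hy)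
  · intro hx
    refine ⟨σ.symm x, hA' _ ?_, σ.apply_symm_apply x⟩
    have := h (σ.symm x)
    rw [σ.apply_symm_apply] at this
    rw [← this]; exact hA x hx

/-- the ket finset -/
def ketF : Finset (Fin r × Bool) :=
  Finset.univ.map ⟨fun k => (k, false), fun a b h => (Prod.mk.injEq _ _ _ _ ▸ h).1⟩

lemma mem_ketF (x : Fin r × Bool) : x ∈ ketF r ↔ x.2 = false := by
  rcases x with ⟨k, b⟩
  simp [ketF, Prod.ext_iff, eq_comm]
  exact ⟨fun ⟨a, h1, h2⟩ => h2, fun h => ⟨k, rfl, h⟩⟩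

lemma card_ketF : (ketF r).card = r := by simp [ketF]

lemma mem_ketF_compl (x : Fin r × Bool) : x ∈ (ketF r)ᶜ ↔ x.2 = true := by
  simp [mem_compl, mem_ketF]

variable [NeZero r]

def x0 : Fin r × Bool := (0, false)

lemma x0_mem_ketF : x0 r ∈ ketF r := (mem_ketF r _).2 rfl

/-- canonical representatives of balanced bipartitions -/
def S0 := {A : Finset (Fin r × Bool) // A.card = r ∧ x0 r ∈ A}

lemma card_univ_pb : Fintype.card (Fin r × Bool) = 2 * r := by simp [mul_comm]

lemma card_compl_r {A : Finset (Fin r × Bool)} (hA : A.card = r) : Aᶜ.card = r := by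
  rw [Finset.card_compl, hA, card_univ_pb]; omega

instance : SMul (Perm (Fin r × Bool)) (S0 r) where
  smul σ A := ⟨if x0 r ∈ A.1.image σ then A.1.image σ else (A.1.image σ)ᶜ,
    by
      rcases A with ⟨A, hcard, hmem⟩
      split_ifs with h
      · exact ⟨by rw [Finset.card_image_of_injective _ σ.injective, hcard], h⟩
      · exact ⟨card_compl_r r (by rw [Finset.card_image_of_injective _ σ.injective, hcard]),
          Finset.mem_compl.2 h⟩⟩

instance : MulAction (Perm (Fin r × Bool)) (S0 r) where
  one_smul A := by
    apply Subtype.ext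
    show (if x0 r ∈ A.1.image (1 : Perm (Fin r × Bool)) then A.1.image (1 : Perm (Fin r × Bool))
        else (A.1.image (1 : Perm (Fin r × Bool)))ᶜ) = A.1
    have : A.1.image (1 : Perm (Fin r × Bool)) = A.1 := by
      simp [Finset.image_id]
    rw [this, if_pos A.2.2]
  mul_smul σ π A := by
    apply Subtype.ext
    have e1 : ∀ (τ : Perm (Fin r × Bool)) (B : S0 r),
        ((τ • B : S0 r)).1 = if x0 r ∈ B.1.image τ then B.1.image τ else (B.1.image τ)ᶜ :=
      fun _ _ => rfl
    rw [e1, e1, e1]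
    have himg : A.1.image (σ * π : Perm (Fin r × Bool)) = (A.1.image π).image σ := by
      rw [Finset.image_image]; rfl
    by_cases h : x0 r ∈ A.1.image π
    · rw [if_pos h, himg]
    · rw [if_neg h, himg, image_compl, compl_compl]
      by_cases h2 : x0 r ∈ (A.1.image π).image σ
      · rw [if_pos h2, if_neg (fun hc => Finset.mem_compl.1 hc h2)]
      · rw [if_neg h2, if_pos (Finset.mem_compl.2 h2)]

lemma smul_S0_def (σ : Perm (Fin r × Bool)) (A : S0 r) :
    (σ • A).1 = if x0 r ∈ A.1.image σ then A.1.image σ else (A.1.image σ)ᶜ := rfl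

def K0 : S0 r := ⟨ketF r, card_ketF r, x0_mem_ketF r⟩

lemma x0_not_mem_compl : x0 r ∉ (ketF r)ᶜ := by
  rw [mem_ketF_compl]
  simp [x0]

lemma smul_K0_iff (σ : Perm (Fin r × Bool)) :
    σ • K0 r = K0 r ↔
      (ketF r).image σ = ketF r ∨ (ketF r).image σ = (ketF r)ᶜ := by
  rw [show σ • K0 r = K0 r ↔ (σ • K0 r).1 = (K0 r).1 from Subtype.ext_iff, smul_S0_def]
  show (if x0 r ∈ (ketF r).image σ then (ketF r).image σ else ((ketF r).image σ)ᶜ) = ketF r ↔ _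
  by_cases h : x0 r ∈ (ketF r).image σ
  · rw [if_pos h]
    constructor
    · exact Or.inl
    · rintro (h1 | h1)
      · exact h1
      · rw [h1] at h; exact absurd h (x0_not_mem_compl r)
  · rw [if_neg h]
    constructor
    · intro h1
      right
      rw [← compl_compl ((ketF r).image σ), h1]
    · rintro (h1 | h1)
      · rw [h1] at h; exact absurd (x0_mem_ketF r) h
      · rw [h1, compl_compl]

lemma image_tau_ketF : (ketF r).image (tau r) = (ketF r)ᶜ := by
  ext x
  simp only [mem_image, mem_ketF_compl, mem_ketF]
  constructor
  · rintro ⟨y, hy, rfl⟩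
    rw [tau_apply]; simp [hy]
  · intro hx
    refine ⟨(tau r).symm x, ?_, (tau r).apply_symm_apply x⟩
    have : (tau r).symm x = (x.1, !x.2) := by
      apply (tau r).injective
      rw [(tau r).apply_symm_apply, tau_apply]
      simp
    rw [this]; simp [hx]

lemma image_snd_preserving (σ : Perm (Fin r × Bool)) (h : ∀ x : Fin r × Bool, (σ x).2 = x.2) :
    (ketF r).image σ = ketF r := by
  refine image_eq_of_snd r σ h false _ (fun x hx => (mem_ketF r x).1 hx)
    (fun x hx => (mem_ketF r x).2 hx)

lemma tau_mem : tau r ∈ normPresSubgroup r :=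
  Subgroup.subset_closure (Or.inl rfl)

lemma swap_false_mem (k l : Fin r) :
    Equiv.swap (k, false) (l, false) ∈ normPresSubgroup r :=
  Subgroup.subset_closure (Or.inr ⟨k, l, Or.inl rfl⟩)

lemma swap_true_mem (k l : Fin r) :
    Equiv.swap (k, true) (l, true) ∈ normPresSubgroup r :=
  Subgroup.subset_closure (Or.inr ⟨k, l, Or.inr rfl⟩)

lemma snd_preserving_mem (σ : Perm (Fin r × Bool)) (h : ∀ x : Fin r × Bool, (σ x).2 = x.2) :
    σ ∈ normPresSubgroup r := by
  have hfiber : ∀ b : Bool, ∀ x : Fin r × Bool, (σ x).2 = b ↔ x.2 = b := by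
    intro b x; rw [h]
  -- decompose σ as product of two fiber permutations
  have key : ∀ b : Bool, ∀ π : Perm {x : Fin r × Bool // x.2 = b},
      Perm.ofSubtype π ∈ normPresSubgroup r := by
    intro b π
    refine Equiv.Perm.swap_induction_on π ?_ ?_
    · rw [map_one]; exact (normPresSubgroup r).one_mem
    · intro f x y hxy ih
      rw [map_mul]
      refine (normPresSubgroup r).mul_mem ?_ ih
      rw [Perm.ofSubtype_swap_eq]
      have hx : (x : Fin r × Bool) = (x.1.1, b) := Prod.ext rfl x.2
      have hy : (y : Fin r × Bool) = (y.1.1, b) := Prod.ext rfl y.2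
      rw [hx, hy]
      cases b
      · exact swap_false_mem r _ _
      · exact swap_true_mem r _ _
  have hσ : σ = Perm.ofSubtype (σ.subtypePerm (p := fun x : Fin r × Bool => x.2 = false) (hfiber false)) *
      Perm.ofSubtype (σ.subtypePerm (p := fun x : Fin r × Bool => x.2 = true) (hfiber true)) := by
    apply Equiv.ext
    intro x
    · rcases x with ⟨k, b⟩
      cases b
      · rw [Perm.mul_apply,
          Perm.ofSubtype_apply_of_not_mem (p := fun x : Fin r × Bool => x.2 = true) _ (by simp),
          Perm.ofSubtype_apply_of_mem (p := fun x : Fin r × Bool => x.2 = false) _ rfl]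
        rfl
      · rw [Perm.mul_apply,
          Perm.ofSubtype_apply_of_mem (p := fun x : Fin r × Bool => x.2 = true) _ rfl]
        rw [Perm.ofSubtype_apply_of_not_mem (p := fun x : Fin r × Bool => x.2 = false) _
          (by simp [h (k, true)])]
        rfl
  rw [hσ]
  exact (normPresSubgroup r).mul_mem (key false _) (key true _)

lemma swap_snd (k l : Fin r) (b : Bool) (x : Fin r × Bool) :
    (Equiv.swap (k, b) (l, b) x).2 = x.2 := by
  rw [Equiv.swap_apply_def]
  split_ifs with h1 h2
  · rw [h1]
  · rw [h2]
  · rfl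

lemma snd_of_image_eq (σ : Perm (Fin r × Bool)) (h : (ketF r).image σ = ketF r) :
    ∀ x : Fin r × Bool, (σ x).2 = x.2 := by
  intro x
  cases hb : x.2 with
  | false =>
    have hx : x ∈ ketF r := (mem_ketF r x).2 hb
    have : σ x ∈ (ketF r).image σ := Finset.mem_image_of_mem _ hx
    rw [h] at this
    exact (mem_ketF r _).1 this
  | true =>
    by_contra hc
    have h2 : (σ x).2 = false := by
      cases h3 : (σ x).2
      · rfl
      · exact absurd h3 hc
    have : σ x ∈ (ketF r).image σ := by
      rw [h]; exact (mem_ketF r _).2 h2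
    rcases Finset.mem_image.1 this with ⟨y, hy, hyx⟩
    have := σ.injective hyx
    subst this
    rw [(mem_ketF r y).1 hy] at hb
    exact Bool.false_ne_true hb

theorem normPres_eq_stabilizer :
    normPresSubgroup r = MulAction.stabilizer (Perm (Fin r × Bool)) (K0 r) := by
  apply le_antisymm
  · rw [normPresSubgroup, Subgroup.closure_le]
    rintro σ (rfl | ⟨k, l, rfl | rfl⟩) <;>
      refine SetLike.mem_coe.2 (MulAction.mem_stabilizer_iff.2 ((smul_K0_iff r _).2 ?_))
    · exact Or.inr (image_tau_ketF r)
    · exact Or.inl (image_snd_preserving r _ (swap_snd r k l false))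
    · exact Or.inl (image_snd_preserving r _ (swap_snd r k l true))
  · intro σ hσ
    rw [MulAction.mem_stabilizer_iff, smul_K0_iff] at hσ
    rcases hσ with h | h
    · exact snd_preserving_mem r σ (snd_of_image_eq r σ h)
    · have himg : (ketF r).image (⇑(tau r * σ)) = ketF r := by
        have : (ketF r).image (⇑(tau r * σ)) = ((ketF r).image σ).image (tau r) := by
          rw [Finset.image_image]; rfl
        rw [this, h, _root_.image_compl r, image_tau_ketF, compl_compl]
      have hmem : tau r * σ ∈ normPresSubgroup r :=
        snd_preserving_mem r _ (snd_of_image_eq r _ himg)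
      have : σ = (tau r)⁻¹ * (tau r * σ) := by group
      rw [this]
      exact (normPresSubgroup r).mul_mem ((normPresSubgroup r).inv_mem (tau_mem r)) hmem

lemma exists_smul_eq_K0 (A : S0 r) : ∃ σ : Perm (Fin r × Bool), σ • K0 r = A := by
  have hcards : Fintype.card {x // x ∈ ketF r} = Fintype.card {x // x ∈ A.1} := by
    rw [Fintype.card_coe, Fintype.card_coe, card_ketF, A.2.1]
  let e := Fintype.equivOfCardEq hcards
  refine ⟨e.extendSubtype, ?_⟩
  have himg : (ketF r).image e.extendSubtype = A.1 := by
    apply Finset.eq_of_subset_of_card_le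
    · intro x hx
      rcases Finset.mem_image.1 hx with ⟨y, hy, rfl⟩
      exact e.extendSubtype_mem y hy
    · rw [Finset.card_image_of_injective _ (Equiv.injective _), card_ketF, A.2.1]
  apply Subtype.ext
  rw [smul_S0_def]
  have hK : (K0 r).1.image e.extendSubtype = A.1 := himg
  rw [hK, if_pos A.2.2]

def qmap : (Perm (Fin r × Bool) ⧸ normPresSubgroup r) → S0 r :=
  Quotient.lift (fun g => g • K0 r) (by
    intro a b h
    have hab : a⁻¹ * b ∈ MulAction.stabilizer (Perm (Fin r × Bool)) (K0 r) := by
      rw [← normPres_eq_stabilizer]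
      exact QuotientGroup.leftRel_apply.1 h
    rw [MulAction.mem_stabilizer_iff] at hab
    show a • K0 r = b • K0 r
    calc a • K0 r = a • (a⁻¹ * b) • K0 r := by rw [hab]
    _ = b • K0 r := by rw [← mul_smul, mul_inv_cancel_left]
    )

lemma qmap_mk (g : Perm (Fin r × Bool)) : qmap r (QuotientGroup.mk g) = g • K0 r := rfl

lemma qmap_bijective : Function.Bijective (qmap r) := by
  constructor
  · rintro ⟨a⟩ ⟨b⟩ h
    rw [show (Quot.mk _ a : Perm (Fin r × Bool) ⧸ normPresSubgroup r) = QuotientGroup.mk a from rfl,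
      show (Quot.mk _ b : Perm (Fin r × Bool) ⧸ normPresSubgroup r) = QuotientGroup.mk b from rfl]
      at h ⊢
    rw [qmap_mk, qmap_mk] at h
    rw [QuotientGroup.eq, normPres_eq_stabilizer, MulAction.mem_stabilizer_iff, mul_smul, ← h,
      ← mul_smul, inv_mul_cancel, one_smul]
  · intro A
    rcases exists_smul_eq_K0 r A with ⟨σ, hσ⟩
    exact ⟨QuotientGroup.mk σ, hσ⟩

lemma orbit_quotient_card_eq {G X Y : Type*} [Group G] [MulAction G X] [MulAction G Y]
    (e : X ≃ Y) (he : ∀ (g : G) (x : X), e (g • x) = g • e x) :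
    Nat.card (MulAction.orbitRel.Quotient G X) = Nat.card (MulAction.orbitRel.Quotient G Y) := by
  apply Nat.card_congr
  refine Quotient.congr e ?_
  intro a b
  show MulAction.orbitRel G X a b ↔ MulAction.orbitRel G Y (e a) (e b)
  rw [MulAction.orbitRel_apply, MulAction.orbitRel_apply, MulAction.mem_orbit_iff,
    MulAction.mem_orbit_iff]
  constructor
  · rintro ⟨g, hg⟩
    exact ⟨g, by rw [← he, hg]⟩
  · rintro ⟨g, hg⟩
    exact ⟨g, e.injective (by rw [he, hg])⟩

lemma smul_fixed_iff (σ : Perm (Fin r × Bool)) (A : S0 r) :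
    σ • A = A ↔ A.1.image σ = A.1 ∨ A.1.image σ = A.1ᶜ := by
  rw [show σ • A = A ↔ (σ • A).1 = A.1 from Subtype.ext_iff, smul_S0_def]
  by_cases h : x0 r ∈ A.1.image σ
  · rw [if_pos h]
    constructor
    · exact Or.inl
    · rintro (h1 | h1)
      · exact h1
      · rw [h1] at h; exact absurd A.2.2 (Finset.mem_compl.1 h)
  · rw [if_neg h]
    constructor
    · intro h1
      right
      rw [← compl_compl (A.1.image σ), h1]
    · rintro (h1 | h1)
      · rw [h1] at h; exact absurd A.2.2 h
      · rw [h1, compl_compl]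

lemma mem_image_tau (B : Finset (Fin r × Bool)) (x : Fin r × Bool) :
    x ∈ B.image (tau r) ↔ (x.1, !x.2) ∈ B := by
  constructor
  · rintro h
    rcases Finset.mem_image.1 h with ⟨y, hy, rfl⟩
    rw [tau_apply]
    simpa using hy
  · intro h
    refine Finset.mem_image.2 ⟨(x.1, !x.2), h, ?_⟩
    rw [tau_apply]
    simp

open Finset in
lemma double_count (P : Finset (Fin r × Bool) → Prop) [DecidablePred P]
    (hP : ∀ B, P B → P Bᶜ) :
    (univ.filter P).card = 2 * (univ.filter (fun B => P B ∧ x0 r ∈ B)).card := by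
  have hsplit : (univ.filter P).card
      = ((univ.filter P).filter (fun B => x0 r ∈ B)).card
        + ((univ.filter P).filter (fun B => ¬ (x0 r ∈ B))).card :=
    (Finset.card_filter_add_card_filter_not _).symm
  have h1 : (univ.filter P).filter (fun B => x0 r ∈ B) = univ.filter (fun B => P B ∧ x0 r ∈ B) := by
    rw [Finset.filter_filter]
  have h2 : ((univ.filter P).filter (fun B => ¬ (x0 r ∈ B))).card
      = (univ.filter (fun B => P B ∧ x0 r ∈ B)).card := by
    apply Finset.card_nbij' (i := fun B => Bᶜ) (j := fun B => Bᶜ)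
    · intro B hB
      simp only [Finset.mem_coe, Finset.mem_filter, Finset.mem_univ, true_and, Finset.mem_compl,
        not_not] at hB ⊢
      exact ⟨hP B hB.1, hB.2⟩
    · intro B hB
      simp only [Finset.mem_coe, Finset.mem_filter, Finset.mem_univ, true_and, Finset.mem_compl,
        not_not] at hB ⊢
      exact ⟨hP B hB.1, hB.2⟩
    · intro B _
      exact compl_compl B
    · intro B _
      exact compl_compl B
  rw [hsplit, h1, h2, two_mul]

instance : Fintype (S0 r) := by unfold S0; infer_instance

lemma nat_card_S0_eq :
    Nat.card (S0 r) = (univ.filter (fun B : Finset (Fin r × Bool) => B.card = r ∧ x0 r ∈ B)).card := by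
  have e : S0 r ≃ {A : Finset (Fin r × Bool) // A.card = r ∧ x0 r ∈ A} := Equiv.refl _
  rw [Nat.card_congr e, Nat.card_eq_fintype_card, Fintype.card_subtype]

lemma two_mul_card_S0 : 2 * Nat.card (S0 r) = (2 * r).choose r := by
  rw [nat_card_S0_eq, ← double_count r (fun B => B.card = r) (fun B hB => card_compl_r r hB)]
  rw [← Fintype.card_subtype, Fintype.card_finset_len, card_univ_pb]

def Bf (f : Fin r → Bool) : Finset (Fin r × Bool) := univ.image (fun k => (k, f k))

lemma mem_Bf (f : Fin r → Bool) (y : Fin r × Bool) : y ∈ Bf r f ↔ f y.1 = y.2 := by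
  simp [Bf, Finset.mem_image, Prod.ext_iff]

lemma card_Bf (f : Fin r → Bool) : (Bf r f).card = r := by
  rw [Bf, Finset.card_image_of_injective _ (fun a b h => congrArg Prod.fst h : Function.Injective _)]
  simp

lemma image_tau_Bf (f : Fin r → Bool) : (Bf r f).image (tau r) = (Bf r f)ᶜ := by
  ext x
  rw [mem_image_tau, Finset.mem_compl, mem_Bf, mem_Bf]
  cases hx : x.2 <;> simp

lemma cardW2 :
    (univ.filter (fun B : Finset (Fin r × Bool) => B.card = r ∧ B.image (tau r) = Bᶜ)).card
      = 2 ^ r := by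
  rw [← Fintype.card_subtype]
  have e : (Fin r → Bool) ≃
      {B : Finset (Fin r × Bool) // B.card = r ∧ B.image (tau r) = Bᶜ} := by
    refine ⟨fun f => ⟨Bf r f, card_Bf r f, image_tau_Bf r f⟩,
      fun B => fun k => decide ((k, true) ∈ B.1), ?_, ?_⟩
    · intro f
      funext k
      simp [mem_Bf]
    · rintro ⟨B, hBcard, hBtau⟩
      apply Subtype.ext
      show Bf r _ = B
      have hexc : ∀ x : Fin r × Bool, (x.1, !x.2) ∈ B ↔ x ∉ B := by
        intro x
        rw [← mem_image_tau r B x, hBtau, Finset.mem_compl]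
      ext x
      rw [mem_Bf]
      obtain ⟨k, b⟩ := x
      cases b
      · have h := hexc (k, false)
        simp only [Bool.not_false] at h
        by_cases hm : (k, true) ∈ B
        · simp [hm, h.1 hm]
        · have : (k, false) ∈ B := of_not_not (fun hc => hm (h.2 hc))
          simp [hm, this]
      · by_cases hm : (k, true) ∈ B <;> simp [hm]
  rw [← Fintype.card_congr e, Fintype.card_fun]
  simp

lemma tau_fixed_struct {B : Finset (Fin r × Bool)} (h : B.image (tau r) = B) :
    B = (univ.filter (fun k => (k, false) ∈ B)) ×ˢ (univ : Finset Bool) := by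
  have hcrit : ∀ x : Fin r × Bool, (x.1, !x.2) ∈ B ↔ x ∈ B := by
    intro x
    rw [← mem_image_tau r B x, h]
  ext ⟨k, b⟩
  simp only [Finset.mem_product, Finset.mem_filter, Finset.mem_univ, true_and, and_true]
  cases b
  · rfl
  · simpa using hcrit (k, false)

lemma card_tau_fixed {B : Finset (Fin r × Bool)} (h : B.image (tau r) = B) :
    B.card = (univ.filter (fun k => (k, false) ∈ B)).card * 2 := by
  conv_lhs => rw [tau_fixed_struct r h]
  rw [Finset.card_product]
  simp

lemma cardW1 :
    (univ.filter (fun B : Finset (Fin r × Bool) => B.card = r ∧ B.image (tau r) = B)).card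
      = if Even r then r.choose (r / 2) else 0 := by
  by_cases hev : Even r
  · rw [if_pos hev]
    rw [← Fintype.card_subtype]
    have e : {D : Finset (Fin r) // D.card = r / 2} ≃
        {B : Finset (Fin r × Bool) // B.card = r ∧ B.image (tau r) = B} := by
      refine ⟨fun D => ⟨D.1 ×ˢ (univ : Finset Bool), ?_, ?_⟩, fun B =>
        ⟨univ.filter (fun k => (k, false) ∈ B.1), ?_⟩, ?_, ?_⟩
      · rw [Finset.card_product, D.2]
        simp only [Fintype.card_bool, Finset.card_univ]
        obtain ⟨m, hm⟩ := hev
        omega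
      · ext x
        rw [mem_image_tau]
        simp [Finset.mem_product]
      · have hcc := card_tau_fixed r B.2.2
        have hBcard := B.2.1
        omega
      · rintro ⟨D, hD⟩
        apply Subtype.ext
        show univ.filter _ = D
        ext k
        simp [Finset.mem_product]
      · rintro ⟨B, hBcard, hBtau⟩
        apply Subtype.ext
        exact (tau_fixed_struct r hBtau).symm
    rw [← Fintype.card_congr e, Fintype.card_finset_len]
    simp
  · rw [if_neg hev]
    rw [Finset.card_eq_zero]
    apply Finset.filter_false_of_mem
    rintro B _ ⟨hBcard, hBtau⟩
    apply hev
    have hcc := card_tau_fixed r hBtau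
    exact ⟨(univ.filter (fun k => (k, false) ∈ B)).card, by omega⟩

lemma two_mul_card_fix :
    2 * Nat.card {A : S0 r // tau r • A = A}
      = 2 ^ r + (if Even r then r.choose (r / 2) else 0) := by
  have e : {A : S0 r // tau r • A = A} ≃
      {B : Finset (Fin r × Bool) //
        (B.card = r ∧ (B.image (tau r) = B ∨ B.image (tau r) = Bᶜ)) ∧ x0 r ∈ B} :=
    { toFun := fun A => ⟨A.1.1, ⟨⟨A.1.2.1, (smul_fixed_iff r _ A.1).1 A.2⟩, A.1.2.2⟩⟩
      invFun := fun B => ⟨⟨B.1, B.2.1.1, B.2.2⟩, (smul_fixed_iff r _ _).2 B.2.1.2⟩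
      left_inv := fun A => Subtype.ext (Subtype.ext rfl)
      right_inv := fun B => Subtype.ext rfl }
  have h1 : Nat.card {A : S0 r // tau r • A = A}
      = (univ.filter (fun B : Finset (Fin r × Bool) =>
          (B.card = r ∧ (B.image (tau r) = B ∨ B.image (tau r) = Bᶜ)) ∧ x0 r ∈ B)).card := by
    rw [Nat.card_congr e, Nat.card_eq_fintype_card, Fintype.card_subtype]
  rw [h1, ← double_count r
    (fun B => B.card = r ∧ (B.image (tau r) = B ∨ B.image (tau r) = Bᶜ)) ?_]
  · have hunion : univ.filter (fun B : Finset (Fin r × Bool) =>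
        B.card = r ∧ (B.image (tau r) = B ∨ B.image (tau r) = Bᶜ))
        = univ.filter (fun B => B.card = r ∧ B.image (tau r) = B)
          ∪ univ.filter (fun B => B.card = r ∧ B.image (tau r) = Bᶜ) := by
      ext B
      simp only [Finset.mem_filter, Finset.mem_union, Finset.mem_univ, true_and]
      tauto
    have hdisj : Disjoint
        (univ.filter (fun B : Finset (Fin r × Bool) => B.card = r ∧ B.image (tau r) = B))
        (univ.filter (fun B => B.card = r ∧ B.image (tau r) = Bᶜ)) := by
      rw [Finset.disjoint_left]
      intro B h1' h2'
      simp only [Finset.mem_filter, Finset.mem_univ, true_and] at h1' h2'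
      have hBB : B = Bᶜ := h1'.2.symm.trans h2'.2
      have hpos : 0 < B.card := by rw [h1'.1]; exact Nat.pos_of_ne_zero (NeZero.ne r)
      obtain ⟨x, hx⟩ := Finset.card_pos.1 hpos
      have : x ∈ Bᶜ := by rw [← hBB]; exact hx
      exact Finset.mem_compl.1 this hx
    rw [hunion, Finset.card_union_of_disjoint hdisj, cardW1, cardW2, add_comm]
  · rintro B ⟨hBcard, hBor⟩
    refine ⟨card_compl_r r hBcard, ?_⟩
    rcases hBor with h | h
    · left
      rw [_root_.image_compl r, h]
    · right
      rw [_root_.image_compl r, h, compl_compl]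

lemma tau_ne_one : tau r ≠ 1 := by
  intro h
  have h2 := congrArg (fun σ : Perm (Fin r × Bool) => (σ ((0 : Fin r), false)).2) h
  simp [tau_apply] at h2

lemma orderOf_tau : orderOf (tau r) = 2 :=
  orderOf_eq_prime (by rw [pow_two]; exact tau_sq r) (tau_ne_one r)

lemma zpowers_tau_elems (z : Subgroup.zpowers (tau r)) :
    z = 1 ∨ z = ⟨tau r, Subgroup.mem_zpowers _⟩ := by
  obtain ⟨g, hg⟩ := z
  obtain ⟨k, rfl⟩ := Subgroup.mem_zpowers_iff.mp hg
  have h2 : tau r ^ (2 : ℤ) = 1 := by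
    rw [show (2 : ℤ) = 1 + 1 by norm_num, zpow_add, zpow_one]
    exact tau_sq r
  rcases Int.even_or_odd k with ⟨m, hm⟩ | ⟨m, hm⟩
  · left
    apply Subtype.ext
    show tau r ^ k = 1
    rw [hm, show m + m = 2 * m by ring, zpow_mul, h2, one_zpow]
  · right
    apply Subtype.ext
    show tau r ^ k = tau r
    rw [hm, zpow_add, zpow_mul, h2, one_zpow, one_mul, zpow_one]

lemma burnside_S0 :
    2 * Nat.card (MulAction.orbitRel.Quotient (Subgroup.zpowers (tau r)) (S0 r))
      = Nat.card (S0 r) + Nat.card {A : S0 r // tau r • A = A} := by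
  classical
  letI : Fintype (Subgroup.zpowers (tau r)) := Fintype.ofFinite _
  letI : Fintype (MulAction.orbitRel.Quotient (Subgroup.zpowers (tau r)) (S0 r)) :=
    Fintype.ofFinite _
  letI : ∀ a : Subgroup.zpowers (tau r), Fintype (MulAction.fixedBy (S0 r) a) :=
    fun _ => Fintype.ofFinite _
  have hb := MulAction.sum_card_fixedBy_eq_card_orbits_mul_card_group
    (Subgroup.zpowers (tau r)) (S0 r)
  set t : Subgroup.zpowers (tau r) := ⟨tau r, Subgroup.mem_zpowers _⟩ with ht
  have hne : (1 : Subgroup.zpowers (tau r)) ≠ t := by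
    intro h
    exact tau_ne_one r (congrArg Subtype.val h).symm
  have huniv : (Finset.univ : Finset (Subgroup.zpowers (tau r))) = {1, t} := by
    ext z
    rcases zpowers_tau_elems r z with rfl | rfl <;> simp [ht]
  rw [huniv, Finset.sum_insert (by simpa using hne)] at hb
  rw [Finset.sum_singleton] at hb
  have hcardZ : Fintype.card (Subgroup.zpowers (tau r)) = 2 := by
    rw [← Nat.card_eq_fintype_card, Nat.card_zpowers, orderOf_tau]
  rw [hcardZ] at hb
  have hfix1 : Fintype.card (MulAction.fixedBy (S0 r) (1 : Subgroup.zpowers (tau r)))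
      = Nat.card (S0 r) := by
    rw [← Nat.card_eq_fintype_card, MulAction.fixedBy_one_eq_univ, Nat.card_univ]
  have hfixt : Fintype.card (MulAction.fixedBy (S0 r) t)
      = Nat.card {A : S0 r // tau r • A = A} := by
    rw [← Nat.card_eq_fintype_card]
    apply Nat.card_congr
    exact Equiv.subtypeEquivRight (fun A => Iff.rfl)
  rw [hfix1, hfixt] at hb
  rw [← Nat.card_eq_fintype_card] at hb
  have hΩ : Nat.card (MulAction.orbitRel.Quotient (Subgroup.zpowers (tau r)) (S0 r))
      = Nat.card (Quotient (MulAction.orbitRel (↥(Subgroup.zpowers (tau r))) (S0 r))) := rfl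
  omega

end Aux


/-- The number of orbits of `Z = {e, τ}` acting by left multiplication on the
cosets `S_{2r}/T` equals `(1/4)[C(2r,r) + 2^r + C(r, r/2)·[r even]]`. -/
theorem count_independent_permutation_criteria (r : ℕ) (hr : 0 < r) :
    4 * Nat.card (MulAction.orbitRel.Quotient
        (Subgroup.zpowers (tau r))
        (Equiv.Perm (Fin r × Bool) ⧸ normPresSubgroup r))
      = Nat.choose (2 * r) r + 2 ^ r +
        (if Even r then Nat.choose r (r / 2) else 0) := by
  haveI : NeZero r := ⟨hr.ne'⟩
  have hcongr : Nat.card (MulAction.orbitRel.Quotient (Subgroup.zpowers (tau r))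
        (Equiv.Perm (Fin r × Bool) ⧸ normPresSubgroup r))
      = Nat.card (MulAction.orbitRel.Quotient (Subgroup.zpowers (tau r)) (S0 r)) := by
    apply orbit_quotient_card_eq (Equiv.ofBijective (qmap r) (qmap_bijective r))
    rintro ⟨z, hz⟩ x
    induction x using QuotientGroup.induction_on with
    | H g =>
      simp only [Equiv.ofBijective_apply]
      show (z * g) • K0 r = z • (g • K0 r)
      exact mul_smul z g (K0 r)
  rw [hcongr]
  have hb := burnside_S0 r
  have h1 := two_mul_card_S0 r
  have h2 := two_mul_card_fix r
  have : 4 * Nat.card (MulAction.orbitRel.Quotient (Subgroup.zpowers (tau r)) (S0 r))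
      = 2 * (2 * Nat.card (MulAction.orbitRel.Quotient (Subgroup.zpowers (tau r)) (S0 r))) := by
    ring
  rw [this, hb, mul_add, h1, h2, ← add_assoc]
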